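/- Let U be a subgroup of (ℂ,+) such that for all a, b ∈ U the product ab lies in 2ℤ. Then U ⊆ ℝ or U ⊆ iℝ, and U is discrete; moreover if U ≠ {0} then U = γℤ for some γ ∈ ℂ with γ² ∈ 2ℤ. -/

import Mathlib

open Complex

/-- A subgroup `U ≤ (ℂ,+)` with `ab ∈ 2ℤ` for all `a,b ∈ U` lies on the real or the
imaginary axis, is discrete, and if nonzero equals `γℤ` with `γ² ∈ 2ℤ`. -/
theorem subgroup_with_even_products (U : AddSubgroup ℂ)
    (h : ∀ a ∈ U, ∀ b ∈ U, ∃ n : ℤ, a * b = 2 * n) :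
    ((∀ a ∈ U, (a : ℂ).im = 0) ∨ (∀ a ∈ U, (a : ℂ).re = 0)) ∧
    (∃ ε : ℝ, 0 < ε ∧ ∀ a ∈ U, a ≠ 0 → ε ≤ ‖a‖) ∧
    (U ≠ ⊥ → ∃ γ : ℂ, (∃ n : ℤ, γ ^ 2 = 2 * n) ∧ ∀ z : ℂ, z ∈ U ↔ ∃ m : ℤ, z = m * γ) := by
  -- every element is real or purely imaginary
  have hri : ∀ a ∈ U, a.re * a.im = 0 := by
    intro a ha
    obtain ⟨n, hn⟩ := h a ha a ha
    have := congrArg Complex.im hn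
    simp [Complex.mul_im] at this
    linarith
  -- dichotomy
  have hdich : (∀ a ∈ U, (a : ℂ).im = 0) ∨ (∀ a ∈ U, (a : ℂ).re = 0) := by
    by_contra hc
    push_neg at hc
    obtain ⟨⟨a, ha, ha'⟩, ⟨b, hb, hb'⟩⟩ := hc
    have hare : a.re = 0 := by
      rcases mul_eq_zero.1 (hri a ha) with h1 | h1
      · exact h1
      · exact absurd h1 ha'
    have hbim : b.im = 0 := by
      rcases mul_eq_zero.1 (hri b hb) with h1 | h1
      · exact absurd h1 hb'
      · exact h1
    obtain ⟨n, hn⟩ := h a ha b hb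
    have := congrArg Complex.im hn
    simp [Complex.mul_im, hare, hbim] at this
    rcases this with h1 | h1
    · exact ha' h1
    · exact hb' h1
  -- discreteness
  have heps : ∀ a ∈ U, a ≠ 0 → Real.sqrt 2 ≤ ‖a‖ := by
    intro a ha ha0
    obtain ⟨n, hn⟩ := h a ha a ha
    have hre : a.re * a.re - a.im * a.im = 2 * n := by
      have := congrArg Complex.re hn
      simpa [Complex.mul_re] using this
    have hnsq : Complex.normSq a = a.re * a.re + a.im * a.im := rfl
    have hns : 2 ≤ Complex.normSq a := by
      rcases mul_eq_zero.1 (hri a ha) with h1 | h1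
      · -- purely imaginary
        have him : a.im ≠ 0 := fun h2 => ha0 (Complex.ext h1 h2)
        have hpos : 0 < a.im * a.im := mul_self_pos.2 him
        have h2 : a.im * a.im = -(2 * n) := by
          rw [h1] at hre; linarith
        have hn0 : (n : ℝ) < 0 := by nlinarith
        have hnint : n < 0 := by exact_mod_cast hn0
        have : (n : ℝ) ≤ -1 := by exact_mod_cast (by omega : n ≤ -1)
        rw [hnsq, h1]; linarith
      · -- real
        have hre0 : a.re ≠ 0 := fun h2 => ha0 (Complex.ext h2 h1)
        have hpos : 0 < a.re * a.re := mul_self_pos.2 hre0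
        have h2 : a.re * a.re = 2 * n := by rw [h1] at hre; linarith
        have hn0 : (0 : ℝ) < n := by nlinarith
        have hnint : 0 < n := by exact_mod_cast hn0
        have : (1 : ℝ) ≤ n := by exact_mod_cast (by omega : 1 ≤ n)
        rw [hnsq, h1]; linarith
    calc Real.sqrt 2 ≤ Real.sqrt (Complex.normSq a) := Real.sqrt_le_sqrt hns
      _ = ‖a‖ := by rw [Complex.norm_def]
  have hsqrt2 : (0:ℝ) < Real.sqrt 2 := by positivity
  refine ⟨hdich, ⟨Real.sqrt 2, hsqrt2, heps⟩, ?_⟩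
  intro _
  rcases hdich with hreal | himag
  · -- all real; consider the image under re
    set S : AddSubgroup ℝ := U.map Complex.reAddGroupHom with hS
    have hmem : ∀ x : ℝ, x ∈ S ↔ (x : ℂ) ∈ U := by
      intro x
      constructor
      · rintro ⟨z, hz, rfl⟩
        have : (z.re : ℂ) = z := Complex.ext (by simp) (by simp [hreal z hz])
        simpa [Complex.reAddGroupHom, this] using hz
      · intro hx
        exact ⟨(x : ℂ), hx, by simp [Complex.reAddGroupHom]⟩
    rcases AddSubgroup.dense_or_cyclic S with hd | ⟨a, hcyc⟩
    · -- dense contradicts discreteness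
      exfalso
      obtain ⟨s, hsS, hs⟩ := hd.exists_mem_open isOpen_Ioo
        (Set.nonempty_Ioo.2 (by norm_num : (1:ℝ) < 5/4))
      have hsU : (s : ℂ) ∈ U := (hmem s).1 hsS
      have hs0 : (s : ℂ) ≠ 0 := by
        simp only [ne_eq, Complex.ofReal_eq_zero]
        intro hh; rw [hh] at hs; exact absurd hs.1 (by norm_num)
      have := heps _ hsU hs0
      rw [Complex.norm_real, Real.norm_eq_abs] at this
      have h54 : |s| < 5/4 := abs_lt.2 ⟨by linarith [hs.1], hs.2⟩
      have : Real.sqrt 2 < 5/4 := lt_of_le_of_lt this h54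
      nlinarith [Real.sq_sqrt (by norm_num : (0:ℝ) ≤ 2), Real.sqrt_nonneg 2]
    · refine ⟨(a : ℂ), ?_, ?_⟩
      · have haU : (a : ℂ) ∈ U :=
          (hmem a).1 (hcyc ▸ AddSubgroup.mem_closure_singleton.2 ⟨1, one_smul _ _⟩)
        obtain ⟨n, hn⟩ := h _ haU _ haU
        exact ⟨n, by rw [sq]; exact hn⟩
      · intro z
        constructor
        · intro hz
          have : z.re ∈ S := ⟨z, hz, rfl⟩
          rw [hcyc, AddSubgroup.mem_closure_singleton] at this
          obtain ⟨m, hm⟩ := this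
          refine ⟨m, ?_⟩
          have hz' : (z.re : ℂ) = z := Complex.ext (by simp) (by simp [hreal z hz])
          rw [← hz', ← hm]
          push_cast [zsmul_eq_mul]
          ring
        · rintro ⟨m, rfl⟩
          have haU : (a : ℂ) ∈ U :=
            (hmem a).1 (hcyc ▸ AddSubgroup.mem_closure_singleton.2 ⟨1, one_smul _ _⟩)
          simpa using AddSubgroup.zsmul_mem U haU m
  · -- all purely imaginary; consider the image under im
    set S : AddSubgroup ℝ := U.map Complex.imAddGroupHom with hS
    have hmem : ∀ x : ℝ, x ∈ S ↔ (x : ℂ) * Complex.I ∈ U := by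
      intro x
      constructor
      · rintro ⟨z, hz, rfl⟩
        have : (z.im : ℂ) * Complex.I = z :=
          Complex.ext (by simp [himag z hz]) (by simp)
        simpa [Complex.imAddGroupHom, this] using hz
      · intro hx
        exact ⟨(x : ℂ) * Complex.I, hx, by simp [Complex.imAddGroupHom]⟩
    rcases AddSubgroup.dense_or_cyclic S with hd | ⟨a, hcyc⟩
    · exfalso
      obtain ⟨s, hsS, hs⟩ := hd.exists_mem_open isOpen_Ioo
        (Set.nonempty_Ioo.2 (by norm_num : (1:ℝ) < 5/4))
      have hsU : (s : ℂ) * Complex.I ∈ U := (hmem s).1 hsS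
      have hs0 : (s : ℂ) * Complex.I ≠ 0 := by
        simp only [ne_eq, mul_eq_zero, Complex.ofReal_eq_zero, Complex.I_ne_zero, or_false]
        intro hh; rw [hh] at hs; exact absurd hs.1 (by norm_num)
      have := heps _ hsU hs0
      rw [norm_mul, Complex.norm_real, Real.norm_eq_abs, Complex.norm_I, mul_one] at this
      have h54 : |s| < 5/4 := abs_lt.2 ⟨by linarith [hs.1], hs.2⟩
      have : Real.sqrt 2 < 5/4 := lt_of_le_of_lt this h54
      nlinarith [Real.sq_sqrt (by norm_num : (0:ℝ) ≤ 2), Real.sqrt_nonneg 2]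
    · refine ⟨(a : ℂ) * Complex.I, ?_, ?_⟩
      · have haU : (a : ℂ) * Complex.I ∈ U :=
          (hmem a).1 (hcyc ▸ AddSubgroup.mem_closure_singleton.2 ⟨1, one_smul _ _⟩)
        obtain ⟨n, hn⟩ := h _ haU _ haU
        exact ⟨n, by rw [sq]; exact hn⟩
      · intro z
        constructor
        · intro hz
          have : z.im ∈ S := ⟨z, hz, rfl⟩
          rw [hcyc, AddSubgroup.mem_closure_singleton] at this
          obtain ⟨m, hm⟩ := this
          refine ⟨m, ?_⟩
          have hz' : (z.im : ℂ) * Complex.I = z :=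
            Complex.ext (by simp [himag z hz]) (by simp)
          rw [← hz', ← hm]
          push_cast [zsmul_eq_mul]
          ring
        · rintro ⟨m, rfl⟩
          have haU : (a : ℂ) * Complex.I ∈ U :=
            (hmem a).1 (hcyc ▸ AddSubgroup.mem_closure_singleton.2 ⟨1, one_smul _ _⟩)
          simpa using AddSubgroup.zsmul_mem U haU m
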